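/- There exists N₀ ∈ ℕ, depending only on Q, α and θ, such that for every N ≥ N₀ and every pair (M,A) consisting of a representation M of Q on (V_i) and a family A = (A_i : E_i → V_i)_{i∈Q0⁺}: (M,A) is θ⁺-semi-stable if and only if M is θ-semi-stable and A_i is a linear isomorphism for every i ∈ Q0⁺; and (M,A) is θ⁺-stable if and only if M is θ-stable and A_i is a linear isomorphism for every i ∈ Q0⁺. -/

import Mathlib

open Module

section

variable {k Q0 Q1 : Type} [Field k] (src tgt : Q1 → Q0)
  (V : Q0 → Type) [∀ i, AddCommGroup (V i)] [∀ i, Module k (V i)]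

/-- `U` is a subrepresentation of the representation `M`. -/
def IsSubrep (M : ∀ a : Q1, V (src a) →ₗ[k] V (tgt a))
    (U : ∀ i : Q0, Submodule k (V i)) : Prop :=
  ∀ a : Q1, ∀ x ∈ U (src a), M a x ∈ U (tgt a)

variable [Fintype Q0]

/-- `M` is θ-semi-stable: `θ((V_i)_i) = 0` and `θ(U) ≤ 0` for every
subrepresentation `U`. -/
def ThetaSemistable (θ : Q0 → ℤ) (M : ∀ a : Q1, V (src a) →ₗ[k] V (tgt a)) : Prop :=
  (∑ i : Q0, θ i * (finrank k (V i) : ℤ)) = 0 ∧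
  ∀ U : ∀ i : Q0, Submodule k (V i), IsSubrep src tgt V M U →
    ∑ i : Q0, θ i * (finrank k (U i) : ℤ) ≤ 0

/-- `M` is θ-stable: θ-semi-stable and `θ(U) < 0` for every subrepresentation `U` other
than `0` and `(V_i)_i`. -/
def ThetaStable (θ : Q0 → ℤ) (M : ∀ a : Q1, V (src a) →ₗ[k] V (tgt a)) : Prop :=
  ThetaSemistable src tgt V θ M ∧
  ∀ U : ∀ i : Q0, Submodule k (V i), IsSubrep src tgt V M U →
    (¬ ∀ i, U i = ⊥) → (¬ ∀ i, U i = ⊤) →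
    ∑ i : Q0, θ i * (finrank k (U i) : ℤ) < 0

variable (θ : Q0 → ℤ)
  (E : {i : Q0 // 0 ≤ θ i} → Type) [∀ i, AddCommGroup (E i)] [∀ i, Module k (E i)]

/-- The θ⁺-value of a framed subrepresentation `(W,U)` for the framing parameter `N`. -/
noncomputable def ThetaPlusVal (N : ℕ) (W : ∀ i : {i : Q0 // 0 ≤ θ i}, Submodule k (E i))
    (U : ∀ i : Q0, Submodule k (V i)) : ℤ :=
  (∑ i : {i : Q0 // 0 ≤ θ i},
      ((N : ℤ) * (finrank k (W i) : ℤ) + (θ i.1 - (N : ℤ)) * (finrank k (U i.1) : ℤ)))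
    + ∑ i : {i : Q0 // ¬ 0 ≤ θ i}, θ i.1 * (finrank k (U i.1) : ℤ)

/-- `(M,A)` is θ⁺-semi-stable: every framed subrepresentation `(W,U)` (so `A_i(W_i) ⊆ U_i`
for `i ∈ Q0⁺`) has θ⁺-value `≤ 0`. -/
def ThetaPlusSemistable (N : ℕ) (M : ∀ a : Q1, V (src a) →ₗ[k] V (tgt a))
    (A : ∀ i : {i : Q0 // 0 ≤ θ i}, E i →ₗ[k] V i.1) : Prop :=
  ∀ (W : ∀ i : {i : Q0 // 0 ≤ θ i}, Submodule k (E i)) (U : ∀ i : Q0, Submodule k (V i)),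
    IsSubrep src tgt V M U →
    (∀ i : {i : Q0 // 0 ≤ θ i}, ∀ x ∈ W i, A i x ∈ U i.1) →
    ThetaPlusVal V θ E N W U ≤ 0

/-- `(M,A)` is θ⁺-stable: every framed subrepresentation other than `(0,0)` and
`((E_i)_i,(V_i)_i)` has θ⁺-value `< 0`. -/
def ThetaPlusStable (N : ℕ) (M : ∀ a : Q1, V (src a) →ₗ[k] V (tgt a))
    (A : ∀ i : {i : Q0 // 0 ≤ θ i}, E i →ₗ[k] V i.1) : Prop :=
  ∀ (W : ∀ i : {i : Q0 // 0 ≤ θ i}, Submodule k (E i)) (U : ∀ i : Q0, Submodule k (V i)),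
    IsSubrep src tgt V M U →
    (∀ i : {i : Q0 // 0 ≤ θ i}, ∀ x ∈ W i, A i x ∈ U i.1) →
    ¬((∀ i, W i = ⊥) ∧ (∀ i, U i = ⊥)) →
    ¬((∀ i, W i = ⊤) ∧ (∀ i, U i = ⊤)) →
    ThetaPlusVal V θ E N W U < 0

end

section aux

variable {k Q0 Q1 : Type} [Field k] [Fintype Q0]

/-- The finrank of the preimage of a submodule under a bijective linear map. -/
lemma aux_finrank_comap_of_bijective {M N : Type} [AddCommGroup M] [Module k M]
    [AddCommGroup N] [Module k N] (f : M →ₗ[k] N) (hf : Function.Bijective f)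
    (p : Submodule k N) :
    finrank k (p.comap f) = finrank k p := by
  let e := LinearEquiv.ofBijective f hf
  have h1 : p.comap f = p.comap (e : M →ₗ[k] N) := rfl
  rw [h1, Submodule.comap_equiv_eq_map_symm, LinearEquiv.finrank_map_eq]

variable (src tgt : Q1 → Q0)
  (V : Q0 → Type) [∀ i, AddCommGroup (V i)] [∀ i, Module k (V i)]
  (θ : Q0 → ℤ)
  (E : {i : Q0 // 0 ≤ θ i} → Type) [∀ i, AddCommGroup (E i)] [∀ i, Module k (E i)]

/-- Rewriting the θ⁺-value. -/
lemma aux_val (N : ℕ) (W : ∀ i : {i : Q0 // 0 ≤ θ i}, Submodule k (E i))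
    (U : ∀ i : Q0, Submodule k (V i)) :
    ThetaPlusVal V θ E N W U =
      (N : ℤ) * (∑ i : {i : Q0 // 0 ≤ θ i},
          ((finrank k (W i) : ℤ) - (finrank k (U i.1) : ℤ)))
        + ∑ i : Q0, θ i * (finrank k (U i) : ℤ) := by
  classical
  rw [← Fintype.sum_subtype_add_sum_subtype (fun i => 0 ≤ θ i)
      (fun i => θ i * (finrank k (U i) : ℤ))]
  unfold ThetaPlusVal
  rw [Finset.mul_sum, ← add_assoc, ← Finset.sum_add_distrib]
  congr 1
  exact Finset.sum_congr rfl fun i _ => by ring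

omit [Fintype Q0] in
/-- The zero family is a subrepresentation. -/
lemma aux_subrep_bot (M : ∀ a : Q1, V (src a) →ₗ[k] V (tgt a)) :
    IsSubrep src tgt V M (fun _ => ⊥) := by
  intro a x hx
  rw [Submodule.mem_bot] at hx ⊢
  rw [hx, map_zero]

end aux

/-- For `N ≫ 0`: `(M,A)` is θ⁺-(semi-)stable if and only if `M` is θ-(semi-)stable and
all `A_i`, `i ∈ Q0⁺`, are isomorphisms. -/
theorem statement8 {k Q0 Q1 : Type} [Field k] [Fintype Q0] [Fintype Q1]
    (src tgt : Q1 → Q0)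
    (V : Q0 → Type) [∀ i, AddCommGroup (V i)] [∀ i, Module k (V i)]
    [∀ i, FiniteDimensional k (V i)]
    (θ : Q0 → ℤ)
    (hθ : ∑ i : Q0, θ i * (finrank k (V i) : ℤ) = 0)
    (E : {i : Q0 // 0 ≤ θ i} → Type) [∀ i, AddCommGroup (E i)] [∀ i, Module k (E i)]
    [∀ i, FiniteDimensional k (E i)]
    (hE : ∀ i : {i : Q0 // 0 ≤ θ i}, finrank k (E i) = finrank k (V i.1)) :
    ∃ N₀ : ℕ, ∀ N : ℕ, N₀ ≤ N →
      ∀ (M : ∀ a : Q1, V (src a) →ₗ[k] V (tgt a))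
        (A : ∀ i : {i : Q0 // 0 ≤ θ i}, E i →ₗ[k] V i.1),
        (ThetaPlusSemistable src tgt V θ E N M A ↔
          (ThetaSemistable src tgt V θ M ∧ ∀ i, Function.Bijective (A i))) ∧
        (ThetaPlusStable src tgt V θ E N M A ↔
          (ThetaStable src tgt V θ M ∧ ∀ i, Function.Bijective (A i))) := by
  classical
  refine ⟨1, fun N hN M A => ?_⟩
  have hN0 : (0:ℤ) < (N:ℤ) := by exact_mod_cast hN
  have hval := aux_val (k := k) V θ E N
  -- θ⁺-semistability forces all `A i` to be bijective.
  have hbij : ThetaPlusSemistable src tgt V θ E N M A → ∀ i, Function.Bijective (A i) := by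
    intro hss i
    have h1 := hss (fun j => LinearMap.ker (A j)) (fun _ => ⊥)
      (aux_subrep_bot src tgt V M)
      (fun j x hx => (Submodule.mem_bot k).mpr (LinearMap.mem_ker.mp hx))
    rw [hval] at h1
    simp only [finrank_bot, Nat.cast_zero, sub_zero, mul_zero,
      Finset.sum_const_zero, add_zero] at h1
    have hnn : (0:ℤ) ≤ ∑ j : {i : Q0 // 0 ≤ θ i}, (finrank k (LinearMap.ker (A j)) : ℤ) :=
      Finset.sum_nonneg fun j _ => by positivity
    have hsum0 : ∑ j : {i : Q0 // 0 ≤ θ i}, (finrank k (LinearMap.ker (A j)) : ℤ) = 0 := by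
      nlinarith
    have hterm := (Finset.sum_eq_zero_iff_of_nonneg
      (fun j _ => by positivity)).mp hsum0 i (Finset.mem_univ i)
    have hker : LinearMap.ker (A i) = ⊥ := by
      have h2 : finrank k (LinearMap.ker (A i)) = 0 := by exact_mod_cast hterm
      exact Submodule.finrank_eq_zero.mp h2
    have hinj : Function.Injective (A i) := LinearMap.ker_eq_bot.mp hker
    exact ⟨hinj, (LinearMap.injective_iff_surjective_of_finrank_eq_finrank (hE i)).mp hinj⟩
  -- the key vanishing sum for the canonical framing by preimages
  have hcz : (∀ i, Function.Bijective (A i)) → ∀ U : ∀ i : Q0, Submodule k (V i),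
      ∑ j : {i : Q0 // 0 ≤ θ i},
        ((finrank k ((U j.1).comap (A j)) : ℤ) - (finrank k (U j.1) : ℤ)) = 0 := by
    intro hb U
    exact Finset.sum_eq_zero fun j _ => by
      rw [aux_finrank_comap_of_bijective (A j) (hb j)]; ring
  -- θ⁺-semistability + bijectivity gives θ-semistability.
  have hthss : ThetaPlusSemistable src tgt V θ E N M A →
      (∀ i, Function.Bijective (A i)) → ThetaSemistable src tgt V θ M := by
    intro hss hb
    refine ⟨hθ, fun U hU => ?_⟩
    have h1 := hss (fun j => (U j.1).comap (A j)) U hU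
      (fun j x hx => Submodule.mem_comap.mp hx)
    rw [hval, hcz hb U, mul_zero, zero_add] at h1
    exact h1
  -- dimension estimate for framed subrepresentations with bijective framing
  have hWle : ∀ (_ : ∀ i, Function.Bijective (A i))
      (W : ∀ i : {i : Q0 // 0 ≤ θ i}, Submodule k (E i)) (U : ∀ i : Q0, Submodule k (V i)),
      (∀ i : {i : Q0 // 0 ≤ θ i}, ∀ x ∈ W i, A i x ∈ U i.1) →
      ∀ j : {i : Q0 // 0 ≤ θ i}, (finrank k (W j) : ℤ) ≤ (finrank k (U j.1) : ℤ) := by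
    intro hb W U hWU j
    have hle : W j ≤ (U j.1).comap (A j) := fun x hx => Submodule.mem_comap.mpr (hWU j x hx)
    have h2 := Submodule.finrank_mono hle
    rw [aux_finrank_comap_of_bijective (A j) (hb j)] at h2
    exact_mod_cast h2
  -- converse direction for semistability
  have hconv_ss : ThetaSemistable src tgt V θ M → (∀ i, Function.Bijective (A i)) →
      ThetaPlusSemistable src tgt V θ E N M A := by
    intro hM hb W U hU hWU
    rw [hval]
    have hS : ∑ j : {i : Q0 // 0 ≤ θ i},
        ((finrank k (W j) : ℤ) - (finrank k (U j.1) : ℤ)) ≤ 0 :=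
      Finset.sum_nonpos fun j _ => sub_nonpos.mpr (hWle hb W U hWU j)
    have hT := hM.2 U hU
    nlinarith
  -- θ⁺-stability implies θ⁺-semistability
  have hps_ss : ThetaPlusStable src tgt V θ E N M A →
      ThetaPlusSemistable src tgt V θ E N M A := by
    intro hst W U hU hWU
    by_cases hbot : (∀ i, W i = ⊥) ∧ (∀ i, U i = ⊥)
    · rw [hval]
      have h1 : ∑ j : {i : Q0 // 0 ≤ θ i},
          ((finrank k (W j) : ℤ) - (finrank k (U j.1) : ℤ)) = 0 :=
        Finset.sum_eq_zero fun j _ => by rw [hbot.1 j, hbot.2 j.1]; simp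
      have h2 : ∑ i : Q0, θ i * (finrank k (U i) : ℤ) = 0 :=
        Finset.sum_eq_zero fun i _ => by rw [hbot.2 i]; simp
      rw [h1, h2]; simp
    by_cases htop : (∀ i, W i = ⊤) ∧ (∀ i, U i = ⊤)
    · rw [hval]
      have h1 : ∑ j : {i : Q0 // 0 ≤ θ i},
          ((finrank k (W j) : ℤ) - (finrank k (U j.1) : ℤ)) = 0 :=
        Finset.sum_eq_zero fun j _ => by
          rw [htop.1 j, htop.2 j.1]
          simp [finrank_top, hE j]
      have h2 : ∑ i : Q0, θ i * (finrank k (U i) : ℤ) = 0 := by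
        rw [← hθ]
        exact Finset.sum_congr rfl fun i _ => by rw [htop.2 i]; simp [finrank_top]
      rw [h1, h2]; simp
    · exact (hst W U hU hWU hbot htop).le
  -- converse direction for stability
  have hconv_st : ThetaStable src tgt V θ M → (∀ i, Function.Bijective (A i)) →
      ThetaPlusStable src tgt V θ E N M A := by
    intro hM hb W U hU hWU hbot htop
    rw [hval]
    by_cases hUbot : ∀ i, U i = ⊥
    · exfalso
      apply hbot
      refine ⟨fun j => ?_, hUbot⟩
      rw [eq_bot_iff]
      intro x hx
      have h1 : A j x ∈ U j.1 := hWU j x hx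
      rw [hUbot j.1, Submodule.mem_bot] at h1
      have h2 : x = 0 := (hb j).1 (by rw [h1, map_zero])
      rw [Submodule.mem_bot]
      exact h2
    by_cases hUtop : ∀ i, U i = ⊤
    · have hWt : ¬ ∀ i, W i = ⊤ := fun h => htop ⟨h, hUtop⟩
      push_neg at hWt
      obtain ⟨j, hj⟩ := hWt
      have hjlt : (finrank k (W j) : ℤ) - (finrank k (U j.1) : ℤ) < 0 := by
        have h1 : finrank k (W j) < finrank k (E j) :=
          Submodule.finrank_lt hj
        have h2 : finrank k (U j.1) = finrank k (E j) := by
          rw [hUtop j.1, finrank_top, hE j]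
        rw [h2]
        have : (finrank k (W j) : ℤ) < (finrank k (E j) : ℤ) := by exact_mod_cast h1
        linarith
      have hS : ∑ j' : {i : Q0 // 0 ≤ θ i},
          ((finrank k (W j') : ℤ) - (finrank k (U j'.1) : ℤ)) < 0 := by
        have h3 := Finset.sum_lt_sum (s := Finset.univ)
          (f := fun j' : {i : Q0 // 0 ≤ θ i} =>
            (finrank k (W j') : ℤ) - (finrank k (U j'.1) : ℤ))
          (g := fun _ => (0:ℤ))
          (fun j' _ => sub_nonpos.mpr (hWle hb W U hWU j'))
          ⟨j, Finset.mem_univ j, hjlt⟩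
        simpa using h3
      have hT : ∑ i : Q0, θ i * (finrank k (U i) : ℤ) = 0 := by
        rw [← hθ]
        exact Finset.sum_congr rfl fun i _ => by rw [hUtop i]; simp [finrank_top]
      rw [hT, add_zero]
      exact mul_neg_of_pos_of_neg hN0 hS
    · have hT := hM.2 U hU hUbot hUtop
      have hS : ∑ j : {i : Q0 // 0 ≤ θ i},
          ((finrank k (W j) : ℤ) - (finrank k (U j.1) : ℤ)) ≤ 0 :=
        Finset.sum_nonpos fun j _ => sub_nonpos.mpr (hWle hb W U hWU j)
      nlinarith
  constructor
  · constructor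
    · intro hss
      exact ⟨hthss hss (hbij hss), hbij hss⟩
    · rintro ⟨hM, hb⟩
      exact hconv_ss hM hb
  · constructor
    · intro hst
      have hss := hps_ss hst
      have hb := hbij hss
      refine ⟨⟨hthss hss hb, fun U hU hUbot hUtop => ?_⟩, hb⟩
      have h1 := hst (fun j => (U j.1).comap (A j)) U hU
        (fun j x hx => Submodule.mem_comap.mp hx)
        (fun h => hUbot h.2) (fun h => hUtop h.2)
      rw [hval, hcz hb U, mul_zero, zero_add] at h1
      exact h1
    · rintro ⟨hM, hb⟩
      exact hconv_st hM hb
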